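/- Let D(t) ⊂ ℝ² be defined as follows: with g(x,t) = (x²+t²)/(2t) for |x| ≤ t and g(x,t) = |x| for |x| ≥ t, with f₁ = (1/2, −1/2), f₂ = (1/2, 1/2), let D₁(t) = { x f₁ + y f₂ : x ∈ ℝ, y ≥ g(x,t) − 2 }, let Dᵢ(t) for i = 2,3,4 be the image of D₁(t) under rotation about the origin by angle (i−1)π/2, and let D(t) = ∩ᵢ₌₁⁴ Dᵢ(t). For t ∈ [1,4] set d(t) = 2√t − t. Then for every t ∈ [1,4], D(t) is inscribed in the square [−d(t), d(t)]²: one has D(t) ⊆ [−d(t), d(t)]², and sup{ p·e₁ : p ∈ D(t) } = −inf{ p·e₁ : p ∈ D(t) } = d(t), and the same holds for the second coordinate. -/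

import Mathlib

open Real Set

/-- Rost's profile `g(x,t) = (x²+t²)/(2t)` if `|x| ≤ t`, `g(x,t) = |x|` if `|x| ≥ t`. -/
noncomputable def rost (x t : ℝ) : ℝ := if |x| ≤ t then (x ^ 2 + t ^ 2) / (2 * t) else |x|

/-- `f₁ = (e₁ − e₂)/2`. -/
noncomputable def fOne : ℝ × ℝ := (1/2, -1/2)

/-- `f₂ = (e₁ + e₂)/2`. -/
noncomputable def fTwo : ℝ × ℝ := (1/2, 1/2)

/-- Rotation of the plane about the origin by angle `π/2`. -/
def rotQuarter (p : ℝ × ℝ) : ℝ × ℝ := (-p.2, p.1)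

/-- `D₁(t)`: the epigraph of `g(·,t) − 2` in the frame `(0, f₁, f₂)`. -/
noncomputable def dropletOne (t : ℝ) : Set (ℝ × ℝ) :=
  {p | ∃ x y : ℝ, rost x t - 2 ≤ y ∧ p = x • fOne + y • fTwo}

/-- `D(t) = D₁(t) ∩ D₂(t) ∩ D₃(t) ∩ D₄(t)`, where `Dᵢ(t)` is the image of `D₁(t)` under
rotation by `(i−1)π/2` about the origin. -/
noncomputable def droplet (t : ℝ) : Set (ℝ × ℝ) :=
  dropletOne t ∩ (rotQuarter '' dropletOne t) ∩
    (rotQuarter '' (rotQuarter '' dropletOne t)) ∩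
    (rotQuarter '' (rotQuarter '' (rotQuarter '' dropletOne t)))

/-- `d(t) = 2√t − t`. -/
noncomputable def dPole (t : ℝ) : ℝ := 2 * Real.sqrt t - t

lemma rost_neg (x t : ℝ) : rost (-x) t = rost x t := by
  simp [rost, abs_neg, neg_pow]

lemma mem_dropletOne_iff (t : ℝ) (p : ℝ × ℝ) :
    p ∈ dropletOne t ↔ rost (p.1 - p.2) t - 2 ≤ p.1 + p.2 := by
  constructor
  · rintro ⟨x, y, h, rfl⟩
    have h1 : (x • fOne + y • fTwo).1 - (x • fOne + y • fTwo).2 = x := by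
      simp [fOne, fTwo]; ring
    have h2 : (x • fOne + y • fTwo).1 + (x • fOne + y • fTwo).2 = y := by
      simp [fOne, fTwo]; ring
    rw [h1, h2]; exact h
  · intro h
    exact ⟨p.1 - p.2, p.1 + p.2, h, by simp [fOne, fTwo, Prod.ext_iff]; constructor <;> ring⟩

lemma mem_rot_image (S : Set (ℝ × ℝ)) (p : ℝ × ℝ) :
    p ∈ rotQuarter '' S ↔ (p.2, -p.1) ∈ S := by
  constructor
  · rintro ⟨q, hq, rfl⟩; simpa [rotQuarter] using hq
  · intro h; exact ⟨(p.2, -p.1), h, by simp [rotQuarter]⟩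

lemma mem_droplet_iff (t : ℝ) (p : ℝ × ℝ) :
    p ∈ droplet t ↔ rost (p.1 - p.2) t + |p.1 + p.2| ≤ 2 ∧ rost (p.1 + p.2) t + |p.1 - p.2| ≤ 2 := by
  simp only [droplet, mem_inter_iff, mem_rot_image, mem_dropletOne_iff]
  have e1 : rost (p.2 - -p.1) t = rost (p.1 + p.2) t := by rw [show p.2 - -p.1 = p.1 + p.2 by ring]
  have e2 : rost (-p.1 - -p.2) t = rost (p.1 - p.2) t := by
    rw [show -p.1 - -p.2 = -(p.1 - p.2) by ring, rost_neg]
  have e3 : rost (-p.2 - - -p.1) t = rost (p.1 + p.2) t := by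
    rw [show -p.2 - - -p.1 = -(p.1 + p.2) by ring, rost_neg]
  rw [e1, e2, e3]
  constructor
  · rintro ⟨⟨⟨h1, h2⟩, h3⟩, h4⟩
    constructor
    · rcases abs_cases (p.1 + p.2) with ⟨h, _⟩ | ⟨h, _⟩ <;> rw [h] <;> linarith
    · rcases abs_cases (p.1 - p.2) with ⟨h, _⟩ | ⟨h, _⟩ <;> rw [h] <;> linarith
  · rintro ⟨h1, h2⟩
    have a1 := abs_le.mp (show |p.1 + p.2| ≤ 2 - rost (p.1 - p.2) t by linarith)
    have a2 := abs_le.mp (show |p.1 - p.2| ≤ 2 - rost (p.1 + p.2) t by linarith)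
    refine ⟨⟨⟨by linarith [a1.1], by linarith [a2.1]⟩, by linarith [a1.2]⟩, by linarith [a2.2]⟩

lemma rost_tangent (t x : ℝ) (ht : 1 ≤ t) :
    2 * (|x| + t) ≤ Real.sqrt t * (rost x t + |x| + 2) := by
  set s := Real.sqrt t with hs
  have hs1 : 1 ≤ s := by
    rw [hs, show (1:ℝ) = Real.sqrt 1 by simp]; exact Real.sqrt_le_sqrt ht
  have hst : s ^ 2 = t := Real.sq_sqrt (by linarith)
  have ha : (0:ℝ) ≤ |x| := abs_nonneg x
  have hxa : x ^ 2 = |x| ^ 2 := (sq_abs x).symm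
  unfold rost
  split_ifs with h
  · rw [← hst] at h ⊢
    have hs0 : (0:ℝ) < s := by linarith
    have key : s * ((x ^ 2 + (s ^ 2) ^ 2) / (2 * s ^ 2) + |x| + 2) - 2 * (|x| + s ^ 2)
        = (|x| + s ^ 2 - 2 * s) ^ 2 / (2 * s) := by
      field_simp; linear_combination hxa
    nlinarith [div_nonneg (sq_nonneg (|x| + s ^ 2 - 2 * s)) (by linarith : (0:ℝ) ≤ 2 * s)]
  · push_neg at h
    rw [← hst] at h
    have : s ≤ |x| := le_trans (by nlinarith) h.le
    nlinarith

lemma dPole_prop (t : ℝ) (ht : t ∈ Icc (1:ℝ) 4) :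
    0 ≤ dPole t ∧ |dPole t| ≤ t ∧ rost (dPole t) t + |dPole t| ≤ 2 := by
  obtain ⟨ht1, ht4⟩ := ht
  set s := Real.sqrt t with hs
  have hs1 : 1 ≤ s := by
    rw [hs, show (1:ℝ) = Real.sqrt 1 by simp]; exact Real.sqrt_le_sqrt ht1
  have hs2 : s ≤ 2 := by
    rw [hs, show (2:ℝ) = Real.sqrt 4 by rw [show (4:ℝ) = 2^2 by norm_num, Real.sqrt_sq]; norm_num]
    exact Real.sqrt_le_sqrt ht4
  have hst : s ^ 2 = t := Real.sq_sqrt (by linarith)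
  have hd : dPole t = 2 * s - s ^ 2 := by rw [dPole, hst, hs]
  have hd0 : 0 ≤ dPole t := by rw [hd]; nlinarith
  have hdt : dPole t ≤ t := by rw [hd, ← hst]; nlinarith
  have habs : |dPole t| = dPole t := abs_of_nonneg hd0
  refine ⟨hd0, by rw [habs]; exact hdt, ?_⟩
  rw [rost, if_pos (by rw [habs]; exact hdt), habs, hd, ← hst]
  have hs0 : (0:ℝ) < s := by linarith
  have : ((2 * s - s ^ 2) ^ 2 + (s ^ 2) ^ 2) / (2 * s ^ 2) + (2 * s - s ^ 2) = 2 := by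
    field_simp; ring
  linarith

lemma droplet_abs_bound (t : ℝ) (ht : t ∈ Icc (1:ℝ) 4) {p : ℝ × ℝ} (hp : p ∈ droplet t) :
    |p.1| ≤ dPole t ∧ |p.2| ≤ dPole t := by
  obtain ⟨h1, h2⟩ := (mem_droplet_iff t p).mp hp
  set s := Real.sqrt t with hs
  have hs1 : 1 ≤ s := by
    rw [hs, show (1:ℝ) = Real.sqrt 1 by simp]; exact Real.sqrt_le_sqrt ht.1
  have hst : s ^ 2 = t := Real.sq_sqrt (by linarith [ht.1])
  have t1 := rost_tangent t (p.1 + p.2) ht.1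
  have t2 := rost_tangent t (p.1 - p.2) ht.1
  rw [← hs] at t1 t2
  have hsum : rost (p.1 + p.2) t + rost (p.1 - p.2) t + |p.1 + p.2| + |p.1 - p.2| ≤ 4 := by
    linarith
  have hkey : |p.1 + p.2| + |p.1 - p.2| ≤ 2 * dPole t := by
    have hub : s * (rost (p.1 + p.2) t + |p.1 + p.2| + 2) + s * (rost (p.1 - p.2) t + |p.1 - p.2| + 2) ≤ 8 * s := by
      nlinarith
    have : dPole t = 2 * s - s ^ 2 := by rw [dPole, hst, hs]
    rw [this]
    nlinarith
  constructor
  · have := abs_add_le (p.1 + p.2) (p.1 - p.2)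
    rw [show p.1 + p.2 + (p.1 - p.2) = 2 * p.1 by ring] at this
    rw [abs_mul, abs_two] at this
    linarith
  · have := abs_sub (p.1 + p.2) (p.1 - p.2)
    rw [show p.1 + p.2 - (p.1 - p.2) = 2 * p.2 by ring] at this
    rw [abs_mul, abs_two] at this
    linarith

/-- for `t ∈ [1,4]`, `D(t)` is inscribed in the square `[−d(t), d(t)]²`:
`D(t) ⊆ [−d(t), d(t)]²` and the sup/inf of each coordinate over `D(t)` are exactly `±d(t)`. -/
theorem droplet_inscribed (t : ℝ) (ht : t ∈ Icc (1:ℝ) 4) :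
    droplet t ⊆ Icc (-dPole t, -dPole t) (dPole t, dPole t) ∧
    IsLUB ((fun p : ℝ × ℝ => p.1) '' droplet t) (dPole t) ∧
    IsGLB ((fun p : ℝ × ℝ => p.1) '' droplet t) (-dPole t) ∧
    IsLUB ((fun p : ℝ × ℝ => p.2) '' droplet t) (dPole t) ∧
    IsGLB ((fun p : ℝ × ℝ => p.2) '' droplet t) (-dPole t) := by
  have hm := (dPole_prop t ht).2.2
  have mem1 : ((dPole t, (0:ℝ)) : ℝ × ℝ) ∈ droplet t := by
    refine (mem_droplet_iff t _).mpr ⟨?_, ?_⟩ <;> simpa [rost_neg] using hm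
  have mem2 : ((-dPole t, (0:ℝ)) : ℝ × ℝ) ∈ droplet t := by
    refine (mem_droplet_iff t _).mpr ⟨?_, ?_⟩ <;> simpa [rost_neg] using hm
  have mem3 : (((0:ℝ), dPole t) : ℝ × ℝ) ∈ droplet t := by
    refine (mem_droplet_iff t _).mpr ⟨?_, ?_⟩ <;> simpa [rost_neg] using hm
  have mem4 : (((0:ℝ), -dPole t) : ℝ × ℝ) ∈ droplet t := by
    refine (mem_droplet_iff t _).mpr ⟨?_, ?_⟩ <;> simpa [rost_neg] using hm
  refine ⟨?_, ⟨?_, ?_⟩, ⟨?_, ?_⟩, ⟨?_, ?_⟩, ⟨?_, ?_⟩⟩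
  · intro p hp
    obtain ⟨h1, h2⟩ := droplet_abs_bound t ht hp
    rw [mem_Icc]
    exact ⟨⟨(abs_le.mp h1).1, (abs_le.mp h2).1⟩, ⟨(abs_le.mp h1).2, (abs_le.mp h2).2⟩⟩
  · rintro x ⟨p, hp, rfl⟩; exact (abs_le.mp (droplet_abs_bound t ht hp).1).2
  · intro b hb; exact hb ⟨(dPole t, 0), mem1, rfl⟩
  · rintro x ⟨p, hp, rfl⟩; exact (abs_le.mp (droplet_abs_bound t ht hp).1).1
  · intro b hb; exact hb ⟨(-dPole t, 0), mem2, rfl⟩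
  · rintro x ⟨p, hp, rfl⟩; exact (abs_le.mp (droplet_abs_bound t ht hp).2).2
  · intro b hb; exact hb ⟨(0, dPole t), mem3, rfl⟩
  · rintro x ⟨p, hp, rfl⟩; exact (abs_le.mp (droplet_abs_bound t ht hp).2).1
  · intro b hb; exact hb ⟨(0, -dPole t), mem4, rfl⟩
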